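/- Let G be a graph and let G' be obtained from G by adding a set U of new vertices, arbitrary edges between V(G) and U, and for each u ∈ U a new pendant twin vertex u' adjacent only to u (no edges inside U). Then the minimum vertex cover size of G' equals the minimum vertex cover size of G plus |U|. -/

import Mathlib

open scoped Classical

variable {V U : Type*}

/-- The graph obtained from `G` by adding a layer `U` of new vertices, edges between
`V(G)` and `U` (vertex `u ∈ U` is joined to the vertices in `B u`), and for each `u ∈ U`
a pendant twin vertex adjacent only to `u`.  The vertex type is `V ⊕ U ⊕ U`, where the
first `U`-summand is the layer and the second consists of the twins. -/
def addLayerWithTwins (G : SimpleGraph V) (B : U → Finset V) :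
    SimpleGraph (V ⊕ U ⊕ U) where
  Adj x y :=
    match x, y with
    | Sum.inl v, Sum.inl w => G.Adj v w
    | Sum.inl v, Sum.inr (Sum.inl u) => v ∈ B u
    | Sum.inr (Sum.inl u), Sum.inl v => v ∈ B u
    | Sum.inr (Sum.inl u), Sum.inr (Sum.inr u') => u = u'
    | Sum.inr (Sum.inr u'), Sum.inr (Sum.inl u) => u = u'
    | _, _ => False
  symm := by
    constructor
    rintro (v | u | u) (w | w' | w') h <;>
      first | exact G.adj_symm h | exact h | exact h.symm | exact h.elim
  loopless := by
    constructor
    rintro (v | u | u) h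
    · exact G.irrefl h
    · exact h
    · exact h

/-- A vertex cover: a set of vertices meeting every edge. -/
def IsVertexCover {W : Type*} (G : SimpleGraph W) (C : Set W) : Prop :=
  ∀ ⦃a b : W⦄, G.Adj a b → a ∈ C ∨ b ∈ C

/-- Minimum cardinality of a vertex cover. -/
noncomputable def MVC {W : Type*} (G : SimpleGraph W) : ℕ :=
  sInf { n : ℕ | ∃ C : Set W, IsVertexCover G C ∧ C.ncard = n }

lemma MVC_mem {W : Type*} (G : SimpleGraph W) :
    ∃ C : Set W, IsVertexCover G C ∧ C.ncard = MVC G := by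
  have hne : { n : ℕ | ∃ C : Set W, IsVertexCover G C ∧ C.ncard = n }.Nonempty :=
    ⟨(Set.univ : Set W).ncard, Set.univ, fun a b _ => Or.inl trivial, rfl⟩
  exact Nat.sInf_mem hne

lemma MVC_le {W : Type*} (G : SimpleGraph W) {C : Set W} (hC : IsVertexCover G C) :
    MVC G ≤ C.ncard :=
  Nat.sInf_le ⟨C, hC, rfl⟩

/-- Adding a layer `U` with arbitrary edges to `V(G)` plus a pendant twin for each
vertex of `U` increases the minimum vertex cover size by exactly `|U|`. -/
theorem MVC_addLayerWithTwins [Fintype V] [Fintype U]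
    (G : SimpleGraph V) (B : U → Finset V) :
    MVC (addLayerWithTwins G B) = MVC G + Fintype.card U := by
  apply le_antisymm
  · -- upper bound
    obtain ⟨C, hC, hcard⟩ := MVC_mem G
    set C' : Set (V ⊕ U ⊕ U) :=
      Sum.inl '' C ∪ (Sum.inr ∘ Sum.inl) '' Set.univ with hC'def
    have hcover : IsVertexCover (addLayerWithTwins G B) C' := by
      rintro (v | u | u) (w | w' | w') h
      · rcases hC h with h1 | h1
        · exact Or.inl (Or.inl ⟨v, h1, rfl⟩)
        · exact Or.inr (Or.inl ⟨w, h1, rfl⟩)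
      · exact Or.inr (Or.inr ⟨w', trivial, rfl⟩)
      · exact h.elim
      · exact Or.inl (Or.inr ⟨u, trivial, rfl⟩)
      · exact h.elim
      · exact Or.inl (Or.inr ⟨u, trivial, rfl⟩)
      · exact h.elim
      · exact Or.inr (Or.inr ⟨w', trivial, rfl⟩)
      · exact h.elim
    have hdisj : Disjoint (Sum.inl '' C : Set (V ⊕ U ⊕ U))
        ((Sum.inr ∘ Sum.inl) '' Set.univ) := by
      rw [Set.disjoint_left]
      rintro x ⟨v, _, rfl⟩ ⟨u, _, h⟩
      exact Sum.inl_ne_inr h.symm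
    have hfin1 : (Sum.inl '' C : Set (V ⊕ U ⊕ U)).Finite := Set.toFinite _
    have hcard' : C'.ncard = MVC G + Fintype.card U := by
      rw [hC'def, Set.ncard_union_eq hdisj (Set.toFinite _) (Set.toFinite _),
        Set.ncard_image_of_injective _ Sum.inl_injective,
        Set.ncard_image_of_injective _ (Sum.inr_injective.comp Sum.inl_injective),
        hcard, Set.ncard_univ, Nat.card_eq_fintype_card]
    calc MVC (addLayerWithTwins G B) ≤ C'.ncard := MVC_le _ hcover
      _ = _ := hcard'
  · -- lower bound
    obtain ⟨C', hC', hcard⟩ := MVC_mem (addLayerWithTwins G B)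
    set C1 : Set V := {v | Sum.inl v ∈ C'} with hC1def
    have hcov1 : IsVertexCover G C1 := by
      intro a b hab
      exact hC' (show (addLayerWithTwins G B).Adj (Sum.inl a) (Sum.inl b) from hab)
    have hpend : ∀ u : U, Sum.inr (Sum.inl u) ∈ C' ∨ Sum.inr (Sum.inr u) ∈ C' := by
      intro u
      exact hC' (show (addLayerWithTwins G B).Adj (Sum.inr (Sum.inl u))
        (Sum.inr (Sum.inr u)) from rfl)
    set f : U → V ⊕ U ⊕ U := fun u =>
      if Sum.inr (Sum.inl u) ∈ C' then Sum.inr (Sum.inl u) else Sum.inr (Sum.inr u)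
      with hfdef
    have hfinj : Function.Injective f := by
      intro a b hab
      simp only [hfdef] at hab
      split_ifs at hab <;> simp_all
    have hfmem : ∀ u, f u ∈ C' := by
      intro u
      simp only [hfdef]
      split_ifs with h
      · exact h
      · exact (hpend u).resolve_left h
    have hsub : Sum.inl '' C1 ∪ Set.range f ⊆ C' := by
      rintro x (⟨v, hv, rfl⟩ | ⟨u, rfl⟩)
      · exact hv
      · exact hfmem u
    have hdisj : Disjoint (Sum.inl '' C1 : Set (V ⊕ U ⊕ U)) (Set.range f) := by
      rw [Set.disjoint_left]
      rintro x ⟨v, _, rfl⟩ ⟨u, hu⟩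
      simp only [hfdef] at hu
      split_ifs at hu <;> exact Sum.inl_ne_inr hu.symm
    have hrange : (Set.range f).ncard = Fintype.card U := by
      rw [← Nat.card_coe_set_eq, Nat.card_range_of_injective hfinj,
        Nat.card_eq_fintype_card]
    have hkey : C1.ncard + Fintype.card U ≤ C'.ncard := by
      have := Set.ncard_le_ncard hsub (Set.toFinite _)
      rwa [Set.ncard_union_eq hdisj (Set.toFinite _) (Set.toFinite _),
        Set.ncard_image_of_injective _ Sum.inl_injective, hrange] at this
    calc MVC G + Fintype.card U ≤ C1.ncard + Fintype.card U := by
          exact Nat.add_le_add_right (MVC_le _ hcov1) _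
      _ ≤ C'.ncard := hkey
      _ = _ := hcard
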